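/- Let H be a real inner product space, let A ⊆ H be nonempty, let f : H → ℝ be differentiable, let q* lie in the convex hull of A, let δ ∈ (0,1] and C ≥ 0. Let (q_t)_{t≥0} and (s_t)_{t≥0} be sequences with q_0 in the convex hull of A, s_t ∈ A, and q_{t+1} = (1 − γ_t)·q_t + γ_t·s_t where γ_t := 2/(δ·t + 2). Assume for every t: (i) the curvature bound f(q_t + γ·(s_t − q_t)) ≤ f(q_t) + γ·⟨∇f(q_t), s_t − q_t⟩ + (γ²/2)·C for all γ ∈ [0,1]; (ii) the approximate LMO condition ⟨∇f(q_t), s_t − q_t⟩ ≤ δ·⟨∇f(q_t), s − q_t⟩ for all s in the convex hull of A; (iii) the convexity inequality f(y) ≥ f(q_t) + ⟨∇f(q_t), y − q_t⟩ for all y in the convex hull of A; and (iv) f(q*) ≤ f(y) for all y in the convex hull of A. Then for every t ≥ 0, f(q_t) − f(q*) ≤ 2·(C/δ + (f(q_0) − f(q*))) / (δ·t + 2). -/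

import Mathlib

open scoped RealInnerProductSpace

set_option maxHeartbeats 1000000

/-- Theorem 1 of the paper (convergence of the affine-invariant Frank-Wolfe algorithm
with fixed step size `γ_t = 2/(δt+2)`): if `f` is differentiable with, at every iterate,
(i) curvature bounded by `C` along segments toward the atoms `s_t ∈ A`, (ii) an
approximate LMO of multiplicative accuracy `δ ∈ (0,1]`, (iii) convexity of `f` on
`conv(A)` (gradient inequality), and (iv) `q*` minimizing `f` over `conv(A)`, then the
iterates `q_{t+1} = (1-γ_t) q_t + γ_t s_t` satisfy
`f(q_t) - f(q*) ≤ 2 (C/δ + ε₀)/(δt + 2)` with `ε₀ = f(q_0) - f(q*)`. -/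
theorem fw_convergence
    {H : Type*} [NormedAddCommGroup H] [InnerProductSpace ℝ H]
    (A : Set H) (hA : A.Nonempty)
    (f : H → ℝ) (hdiff : Differentiable ℝ f)
    (qstar : H) (hqstar : qstar ∈ convexHull ℝ A)
    (δ C : ℝ) (hδ : δ ∈ Set.Ioc (0 : ℝ) 1) (hC : 0 ≤ C)
    (q s : ℕ → H)
    (hq0 : q 0 ∈ convexHull ℝ A) (hsA : ∀ t, s t ∈ A)
    (hupd : ∀ t : ℕ, q (t + 1)
        = (1 - 2 / (δ * (t : ℝ) + 2)) • q t + (2 / (δ * (t : ℝ) + 2)) • s t)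
    (hcurv : ∀ t : ℕ, ∀ γ ∈ Set.Icc (0 : ℝ) 1,
        f (q t + γ • (s t - q t))
          ≤ f (q t) + γ * fderiv ℝ f (q t) (s t - q t) + (γ ^ 2 / 2) * C)
    (hlmo : ∀ t : ℕ, ∀ y ∈ convexHull ℝ A,
        fderiv ℝ f (q t) (s t - q t) ≤ δ * fderiv ℝ f (q t) (y - q t))
    (hconv : ∀ t : ℕ, ∀ y ∈ convexHull ℝ A,
        f y ≥ f (q t) + fderiv ℝ f (q t) (y - q t))
    (hmin : ∀ y ∈ convexHull ℝ A, f qstar ≤ f y) :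
    ∀ t : ℕ, f (q t) - f qstar
      ≤ 2 * (C / δ + (f (q 0) - f qstar)) / (δ * (t : ℝ) + 2) := by

  obtain ⟨hδ0, hδ1⟩ := hδ
  have hε0nn : 0 ≤ f (q 0) - f qstar := sub_nonneg.2 (hmin _ hq0)
  set K := 2 * (C / δ + (f (q 0) - f qstar)) with hKdef
  have hCδ : 0 ≤ C / δ := div_nonneg hC hδ0.le
  have hK0 : 0 ≤ K := by positivity
  have hKC : 2 * C ≤ δ * K := by
    have h1 : δ * (C / δ) = C := by field_simp
    nlinarith [mul_nonneg hδ0.le hε0nn]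
  intro t
  induction t with
  | zero =>
    simp only [Nat.cast_zero, mul_zero, zero_add]
    rw [hKdef]
    linarith
  | succ t ih =>
    set h := δ * (t : ℝ) + 2 with hh
    have hh2 : 2 ≤ h := by
      have : (0:ℝ) ≤ (t : ℝ) := Nat.cast_nonneg t
      nlinarith
    have hh0 : (0:ℝ) < h := by linarith
    set γ := 2 / h with hγdef
    have hγ0 : 0 ≤ γ := by positivity
    have hγ1 : γ ≤ 1 := by rw [hγdef, div_le_one hh0]; linarith
    have hγh : γ * h = 2 := by rw [hγdef]; field_simp
    have hq1 : q (t+1) = q t + γ • (s t - q t) := by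
      rw [hupd t, ← hh, ← hγdef, smul_sub, sub_smul, one_smul]
      abel
    have step1 := hcurv t γ ⟨hγ0, hγ1⟩
    have step2 := hlmo t qstar hqstar
    have step3 := hconv t qstar hqstar
    have hgrad : fderiv ℝ f (q t) (s t - q t) ≤ δ * (f qstar - f (q t)) := by
      calc fderiv ℝ f (q t) (s t - q t) ≤ δ * fderiv ℝ f (q t) (qstar - q t) := step2
        _ ≤ δ * (f qstar - f (q t)) := by
            apply mul_le_mul_of_nonneg_left _ hδ0.le
            linarith
    have key : f (q (t+1)) - f qstar
        ≤ (1 - δ * γ) * (f (q t) - f qstar) + γ ^ 2 / 2 * C := by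
      rw [hq1]
      nlinarith [mul_le_mul_of_nonneg_left hgrad hγ0]
    have hδγ : δ * γ ≤ 1 := by
      have : δ * γ * h = 2 * δ := by rw [mul_assoc, hγh]; ring
      nlinarith
    have ht1 : δ * ((t:ℝ) + 1) + 2 = h + δ := by rw [hh]; ring
    have hhd : (0:ℝ) < h + δ := by linarith
    have hfin : (1 - δ * γ) * (K / h) + γ ^ 2 / 2 * C ≤ K / (h + δ) := by
      have hid : K / (h + δ) - ((1 - δ * (2/h)) * (K / h) + (2/h) ^ 2 / 2 * C)
          = (δ * K * (h + 2 * δ) - 2 * C * (h + δ)) / (h ^ 2 * (h + δ)) := by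
        field_simp
        ring
      have hnum : 0 ≤ δ * K * (h + 2 * δ) - 2 * C * (h + δ) := by
        have p1 : 0 ≤ (δ * K - 2 * C) * (h + δ) := mul_nonneg (by linarith) hhd.le
        have p2 : 0 ≤ δ * K * δ := mul_nonneg (mul_nonneg hδ0.le hK0) hδ0.le
        nlinarith [p1, p2]
      have hpos : (0:ℝ) < h ^ 2 * (h + δ) := by positivity
      have := div_nonneg hnum hpos.le
      rw [hγdef]
      linarith [hid ▸ this]
    calc f (q (t+1)) - f qstar
        ≤ (1 - δ * γ) * (f (q t) - f qstar) + γ ^ 2 / 2 * C := key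
      _ ≤ (1 - δ * γ) * (K / h) + γ ^ 2 / 2 * C := by
          apply add_le_add _ le_rfl
          apply mul_le_mul_of_nonneg_left _ (by linarith)
          exact ih
      _ ≤ K / (h + δ) := hfin
      _ = 2 * (C / δ + (f (q 0) - f qstar)) / (δ * (((t+1):ℕ):ℝ) + 2) := by
          push_cast
          rw [ht1, hKdef]
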